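/- arXiv:2306.11220 — 2 statements merged into one kernel-verified Lean document; each statement's English description precedes it below -/
import Mathlib

section
/- Fix integers $q, k, b \geq 1$, $\ell \geq 1$, $s \geq 0$ and $t$ with $k\ell + s + 1 \leq t \leq \min\{q, b/2\}$. In the random bipartite cuckoo graph with $q$ left vertices, where each left vertex independently connects to $\ell$ vertices in one uniformly random bin from each of $k$ disjoint groups of $b/k$ bins, plus all $s$ stash vertices, the probability that there exists a set $X$ of $t$ left vertices with $|N(X)| < t$ is at most $\binom{q}{t} \cdot \binom{b}{\lfloor (t-s-1)/\ell \rfloor} \cdot \left(\frac{2(t-s-1)}{b\ell}\right)^{kt}$. -/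
open Finset in
lemma amgm_aux {k : ℕ} (hk : 1 ≤ k) (z : Fin k → ℝ) (hz : ∀ j, 0 ≤ z j) :
    ∏ j, z j ≤ ((∑ j, z j) / k) ^ k := by
  have hk0 : (0:ℝ) < k := by exact_mod_cast hk
  have hsum : ∑ _j : Fin k, (1 / (k:ℝ)) = 1 := by
    simp [Finset.sum_const, Finset.card_univ]
    field_simp
  have h := Real.geom_mean_le_arith_mean_weighted Finset.univ (fun _ => 1 / (k:ℝ)) z
      (fun i _ => by positivity) hsum (fun i _ => hz i)
  have hrhs : ∑ i, (1 / (k:ℝ)) * z i = (∑ j, z j) / k := by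
    rw [← Finset.mul_sum]; ring
  rw [hrhs] at h
  have hprod0 : 0 ≤ ∏ j, z j := Finset.prod_nonneg fun i _ => hz i
  have hlhs : ∏ i, z i ^ (1 / (k:ℝ)) = (∏ j, z j) ^ (1 / (k:ℝ)) :=
    Real.finset_prod_rpow _ _ (fun i _ => hz i) _
  rw [hlhs] at h
  have hx0 : 0 ≤ (∏ j, z j) ^ (1 / (k:ℝ)) := Real.rpow_nonneg hprod0 _
  have := pow_le_pow_left₀ hx0 h k
  calc ∏ j, z j = ((∏ j, z j) ^ (1 / (k:ℝ))) ^ k := by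
        rw [← Real.rpow_natCast ((∏ j, z j) ^ (1 / (k:ℝ))) k, ← Real.rpow_mul hprod0]
        rw [one_div, inv_mul_cancel₀ (by positivity : (k:ℝ) ≠ 0), Real.rpow_one]
    _ ≤ ((∑ j, z j) / k) ^ k := this

set_option maxHeartbeats 1000000 in
open Classical in
lemma main_aux (q k n ℓ s t : ℕ) (hq : 1 ≤ q) (hk : 1 ≤ k) (hn1 : 1 ≤ n) (hl : 1 ≤ ℓ)
    (ht1 : k * ℓ + s + 1 ≤ t) (htq : t ≤ q) (htb' : t ≤ k * n) :
    ((Finset.univ.filter (fun h : Fin q → Fin k → Fin n =>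
        ∃ X : Finset (Fin q), X.card = t ∧
          s + ℓ * (X.biUnion (fun i => Finset.univ.image (fun j : Fin k => (j, h i j)))).card
            < t)).card : ℝ) / (Fintype.card (Fin q → Fin k → Fin n))
      ≤ (q.choose t : ℝ) * ((k*n).choose ((t - s - 1) / ℓ) : ℝ)
          * (2 * ((t : ℝ) - s - 1) / (((k:ℝ) * n) * ℓ)) ^ (k * t) := by
  set m := (t - s - 1) / ℓ with hm
  have hts : s + 1 ≤ t := by nlinarith
  have hml : m * ℓ ≤ t - s - 1 := Nat.div_mul_le_self _ _
  have hmb : m ≤ k * n := by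
    have : m ≤ t - s - 1 := Nat.div_le_self _ _
    omega
  -- the fiber sets and event sets
  set Yf : Finset (Fin k × Fin n) → Fin k → Finset (Fin n) :=
    fun Y j => Finset.univ.filter (fun v => (j, v) ∈ Y) with hYf
  set E : Finset (Fin q) × Finset (Fin k × Fin n) → Finset (Fin q → Fin k → Fin n) :=
    fun p => Fintype.piFinset (fun i => Fintype.piFinset (fun j =>
      if i ∈ p.1 then Yf p.2 j else Finset.univ)) with hE
  set P := (Finset.powersetCard t (Finset.univ : Finset (Fin q))) ×ˢ
           (Finset.powersetCard m (Finset.univ : Finset (Fin k × Fin n))) with hP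
  -- step 1: inclusion
  have hsub : (Finset.univ.filter (fun h : Fin q → Fin k → Fin n =>
        ∃ X : Finset (Fin q), X.card = t ∧
          s + ℓ * (X.biUnion (fun i => Finset.univ.image (fun j : Fin k => (j, h i j)))).card
            < t)) ⊆ P.biUnion E := by
    intro h hh
    rw [Finset.mem_filter] at hh
    obtain ⟨-, X, hXcard, hXlt⟩ := hh
    set bins := X.biUnion (fun i => Finset.univ.image (fun j : Fin k => (j, h i j))) with hbins
    have hcm : bins.card ≤ m := by
      rw [hm, Nat.le_div_iff_mul_le (by omega : 0 < ℓ), Nat.mul_comm]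
      omega
    have hmuniv : m ≤ (Finset.univ : Finset (Fin k × Fin n)).card := by
      simp only [Finset.card_univ, Fintype.card_prod, Fintype.card_fin]
      omega
    obtain ⟨Y, hbY, -, hYm⟩ :=
      Finset.exists_subsuperset_card_eq (Finset.subset_univ bins) hcm hmuniv
    rw [Finset.mem_biUnion]
    refine ⟨(X, Y), ?_, ?_⟩
    · rw [hP, Finset.mem_product]
      exact ⟨Finset.mem_powersetCard.2 ⟨Finset.subset_univ _, hXcard⟩,
        Finset.mem_powersetCard.2 ⟨Finset.subset_univ _, hYm⟩⟩
    · rw [hE]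
      simp only [Fintype.mem_piFinset]
      intro i j
      by_cases hi : i ∈ X
      · simp only [hi, if_true, hYf, Finset.mem_filter, Finset.mem_univ, true_and]
        apply hbY
        rw [hbins, Finset.mem_biUnion]
        exact ⟨i, hi, Finset.mem_image.2 ⟨j, Finset.mem_univ _, rfl⟩⟩
      · simp [hi]
  -- step 2: card of each event
  have hEcard : ∀ X : Finset (Fin q), X.card = t → ∀ Y : Finset (Fin k × Fin n),
      (E (X, Y)).card = (∏ j, (Yf Y j).card) ^ t * n ^ (k * (q - t)) := by
    intro X hX Y
    rw [hE]
    simp only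
    rw [Fintype.card_piFinset]
    have h1 : ∀ i : Fin q, (Fintype.piFinset
        (fun j => if i ∈ X then Yf Y j else (Finset.univ : Finset (Fin n)))).card
        = if i ∈ X then ∏ j, (Yf Y j).card else n ^ k := by
      intro i
      rw [Fintype.card_piFinset]
      by_cases hi : i ∈ X <;> simp [hi, Finset.card_univ]
    rw [Finset.prod_congr rfl (fun i _ => h1 i), ← Finset.prod_mul_prod_compl X]
    have h2 : ∀ i ∈ X, (if i ∈ X then ∏ j, (Yf Y j).card else n ^ k)
        = ∏ j, (Yf Y j).card := fun i hi => if_pos hi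
    have h3 : ∀ i ∈ Xᶜ, (if i ∈ X then ∏ j, (Yf Y j).card else n ^ k) = n ^ k :=
      fun i hi => if_neg (Finset.mem_compl.1 hi)
    rw [Finset.prod_congr rfl h2, Finset.prod_congr rfl h3, Finset.prod_const,
      Finset.prod_const, hX, Finset.card_compl, hX, Fintype.card_fin, ← pow_mul]
  -- step 3: fiber sum
  have hfib : ∀ Y : Finset (Fin k × Fin n), ∑ j, (Yf Y j).card = Y.card := by
    intro Y
    rw [Finset.card_eq_sum_card_fiberwise
      (f := fun p : Fin k × Fin n => p.1) (t := Finset.univ) (fun x _ => Finset.mem_univ x.1)]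
    refine Finset.sum_congr rfl (fun j _ => ?_)
    refine Finset.card_bij' (fun v _ => (j, v)) (fun p _ => p.2) ?_ ?_ ?_ ?_
    · intro v hv
      rw [hYf] at hv
      simp only [Finset.mem_filter, Finset.mem_univ, true_and] at hv
      simp [hv]
    · intro p hp
      simp only [Finset.mem_filter] at hp
      rw [hYf]
      simp only [Finset.mem_filter, Finset.mem_univ, true_and]
      rw [show (j, p.2) = p from by rw [← hp.2]]
      exact hp.1
    · intro v hv; rfl
    · intro p hp
      simp only [Finset.mem_filter] at hp
      obtain ⟨p1, p2⟩ := p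
      simp_all
  -- denominator
  have hnpos : (0:ℝ) < (n:ℝ) := by exact_mod_cast hn1
  have hD : ((Fintype.card (Fin q → Fin k → Fin n) : ℕ) : ℝ) = (n:ℝ)^(k*q) := by
    simp only [Fintype.card_fun, Fintype.card_fin]
    push_cast
    rw [← pow_mul]
  -- per-term bound
  have hterm : ∀ p ∈ P, ((E p).card : ℝ) / (n:ℝ)^(k*q) ≤ ((m:ℝ)/((k*n : ℕ)))^(k*t) := by
    intro p hp
    obtain ⟨X, Y⟩ := p
    rw [hP, Finset.mem_product, Finset.mem_powersetCard, Finset.mem_powersetCard] at hp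
    obtain ⟨⟨-, hXc⟩, ⟨-, hYc⟩⟩ := hp
    have hAle : ((∏ j, (Yf Y j).card : ℕ) : ℝ) ≤ ((m:ℝ)/k)^k := by
      have h := amgm_aux hk (fun j => ((Yf Y j).card : ℝ)) (fun j => Nat.cast_nonneg _)
      have hs : (∑ j, ((Yf Y j).card : ℝ)) = (m:ℝ) := by
        rw [← Nat.cast_sum, hfib Y, hYc]
      rw [hs] at h
      calc ((∏ j, (Yf Y j).card : ℕ) : ℝ) = ∏ j, ((Yf Y j).card : ℝ) := by push_cast; rfl
        _ ≤ _ := h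
    have hEc : ((E (X, Y)).card : ℝ)
        = ((∏ j, (Yf Y j).card : ℕ) : ℝ)^t * (n:ℝ)^(k*(q-t)) := by
      rw [hEcard X hXc Y]
      push_cast
      ring
    rw [hEc]
    have hsplit : (n:ℝ)^(k*q) = (n:ℝ)^(k*t) * (n:ℝ)^(k*(q-t)) := by
      rw [← pow_add, ← Nat.mul_add, Nat.add_sub_cancel' htq]
    rw [hsplit, mul_div_mul_right _ _ (by positivity : ((n:ℝ)^(k*(q-t))) ≠ 0)]
    have hpt : ((∏ j, (Yf Y j).card : ℕ) : ℝ)^t ≤ ((m:ℝ)/k)^(k*t) := by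
      have h2 := pow_le_pow_left₀ (Nat.cast_nonneg _) hAle t
      rw [← pow_mul] at h2
      exact h2
    calc ((∏ j, (Yf Y j).card : ℕ) : ℝ)^t / (n:ℝ)^(k*t)
        ≤ ((m:ℝ)/k)^(k*t) / (n:ℝ)^(k*t) := by gcongr
      _ = ((m:ℝ)/((k:ℝ)*n))^(k*t) := by rw [← div_pow, div_div]
      _ = ((m:ℝ)/((k*n : ℕ)))^(k*t) := by
          congr 2
          push_cast
          ring
  -- card of P
  have hPcard : P.card = q.choose t * (k*n).choose m := by
    rw [hP, Finset.card_product, Finset.card_powersetCard, Finset.card_powersetCard,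
      Finset.card_univ, Finset.card_univ, Fintype.card_fin, Fintype.card_prod,
      Fintype.card_fin, Fintype.card_fin]
  -- base comparison
  have hcast : ((t - s - 1 : ℕ):ℝ) = (t:ℝ) - s - 1 := by
    rw [show t - s - 1 = t - (s+1) from by omega, Nat.cast_sub (by omega)]
    push_cast
    ring
  have hu0 : (0:ℝ) ≤ (t:ℝ) - s - 1 := by
    rw [← hcast]; positivity
  have hbase : (m:ℝ)/((k*n:ℕ)) ≤ 2*((t:ℝ)-s-1)/(((k:ℝ)*n)*ℓ) := by
    have hbpos : (0:ℝ) < ((k*n:ℕ):ℝ) := by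
      have h1 : 1 ≤ k * n := Nat.one_le_iff_ne_zero.2 (Nat.mul_ne_zero (by omega) (by omega))
      exact_mod_cast h1
    have hbpos2 : (0:ℝ) < (k:ℝ)*n := by push_cast at hbpos; exact hbpos
    have hlpos : (0:ℝ) < ℓ := by exact_mod_cast hl
    rw [div_le_div_iff₀ hbpos (by positivity)]
    push_cast
    have hml' : (m:ℝ)*ℓ ≤ (t:ℝ)-s-1 := by
      rw [← hcast]
      exact_mod_cast hml
    nlinarith [mul_le_mul_of_nonneg_right hml' (le_of_lt hbpos),
      mul_nonneg hu0 (le_of_lt hbpos)]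
  -- assemble
  have hnum : ((Finset.univ.filter (fun h : Fin q → Fin k → Fin n =>
        ∃ X : Finset (Fin q), X.card = t ∧
          s + ℓ * (X.biUnion (fun i => Finset.univ.image (fun j : Fin k => (j, h i j)))).card
            < t)).card : ℝ) ≤ ∑ p ∈ P, ((E p).card : ℝ) := by
    have h1 := Finset.card_le_card hsub
    have h2 := Finset.card_biUnion_le (s := P) (t := E)
    exact_mod_cast le_trans h1 h2
  calc ((Finset.univ.filter (fun h : Fin q → Fin k → Fin n =>
        ∃ X : Finset (Fin q), X.card = t ∧
          s + ℓ * (X.biUnion (fun i => Finset.univ.image (fun j : Fin k => (j, h i j)))).card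
            < t)).card : ℝ) / (Fintype.card (Fin q → Fin k → Fin n))
      ≤ (∑ p ∈ P, ((E p).card : ℝ)) / (n:ℝ)^(k*q) := by
        rw [← hD]
        exact div_le_div_of_nonneg_right hnum (by positivity)
    _ = ∑ p ∈ P, ((E p).card:ℝ)/(n:ℝ)^(k*q) := Finset.sum_div _ _ _
    _ ≤ ∑ _p ∈ P, ((m:ℝ)/((k*n:ℕ)))^(k*t) := Finset.sum_le_sum hterm
    _ = (P.card : ℝ) * ((m:ℝ)/((k*n:ℕ)))^(k*t) := by rw [Finset.sum_const, nsmul_eq_mul]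
    _ = (q.choose t : ℝ) * ((k*n).choose m : ℝ) * ((m:ℝ)/((k*n:ℕ)))^(k*t) := by
        rw [hPcard]; push_cast; ring
    _ ≤ (q.choose t : ℝ) * ((k*n).choose m : ℝ)
          * (2 * ((t : ℝ) - s - 1) / (((k:ℝ) * n) * ℓ)) ^ (k * t) := by
        apply mul_le_mul_of_nonneg_left _ (by positivity)
        exact pow_le_pow_left₀ (by positivity) hbase _

open Classical in
/-- In the random bipartite cuckoo graph `G(q,k,b,ℓ,s)` (each of `q` items picks one uniformly
random bin in each of `k` disjoint sub-tables of `b/k` bins; bins have capacity `ℓ`; every item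
is adjacent to all `s` stash vertices), for `k*ℓ+s+1 ≤ t ≤ min(q, b/2)` the probability that
some set `X` of `t` left vertices has `|N(X)| < t` is at most
`C(q,t) · C(b, ⌊(t-s-1)/ℓ⌋) · (2(t-s-1)/(bℓ))^(k·t)`. -/
theorem stmt_3 (q k b ℓ s t : ℕ) (hq : 1 ≤ q) (hk : 1 ≤ k) (hb : 1 ≤ b) (hl : 1 ≤ ℓ)
    (hkb : k ∣ b) (ht1 : k * ℓ + s + 1 ≤ t) (htq : t ≤ q) (htb : t ≤ b / 2) :
    ((Finset.univ.filter (fun h : Fin q → Fin k → Fin (b / k) =>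
        ∃ X : Finset (Fin q), X.card = t ∧
          s + ℓ * (X.biUnion (fun i => Finset.univ.image (fun j : Fin k => (j, h i j)))).card
            < t)).card : ℝ) / (Fintype.card (Fin q → Fin k → Fin (b / k)))
      ≤ (q.choose t : ℝ) * (b.choose ((t - s - 1) / ℓ) : ℝ)
          * (2 * ((t : ℝ) - s - 1) / ((b : ℝ) * ℓ)) ^ (k * t) := by
  obtain ⟨n, rfl⟩ : ∃ n, b = k * n := hkb
  have hdiv : k * n / k = n := Nat.mul_div_cancel_left n (by omega)
  rw [hdiv]
  have hn1 : 1 ≤ n := by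
    rcases Nat.eq_zero_or_pos n with h | h
    · subst h; simp at hb
    · exact h
  have := main_aux q k n ℓ s t hq hk hn1 hl ht1 htq (le_trans htb (Nat.div_le_self _ _))
  convert this using 3
  push_cast
  ring
end

section
/- Let $n$ be sufficiently large, $b \geq (2e)^5 n$, and $k \geq 4$. Then for every $t$ with $k+1 \leq t \leq n$, $\binom{n}{t}\binom{b}{t-1}\left(\frac{2(t-1)}{b}\right)^{kt} \leq \left(\frac{t-1}{2n}\right)^{(k-3)(t-1)}$. -/
/-- `E^a * 2^b * N^c ≤ B^c` when `B ≥ (2E)^5·N`, `E ≥ 1`, `a,b ≤ 5c`. -/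
lemma aux_pow_le (E N B : ℝ) (hE : 1 ≤ E) (hN : 0 ≤ N) (hB : (2*E)^5 * N ≤ B)
    (a b c : ℕ) (ha : a ≤ 5*c) (hb : b ≤ 5*c) :
    E^a * 2^b * N^c ≤ B^c := by
  calc E^a * 2^b * N^c ≤ E^(5*c) * 2^(5*c) * N^c := by
        have h1 : E^a ≤ E^(5*c) := pow_le_pow_right₀ hE ha
        have h2 : (2:ℝ)^b ≤ 2^(5*c) := pow_le_pow_right₀ (by norm_num) hb
        exact mul_le_mul_of_nonneg_right
          (mul_le_mul h1 h2 (by positivity) (by positivity)) (by positivity)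
    _ = ((2*E)^5 * N)^c := by rw [mul_pow ((2*E)^5) N c, ← pow_mul]; rw [mul_pow]; ring
    _ ≤ B^c := pow_le_pow_left₀ (by positivity) hB c

lemma choose_le_real (n r : ℕ) (hr : 0 < r) :
    (n.choose r : ℝ) ≤ (Real.exp 1 * n / r) ^ r := by
  have hrpos : (0:ℝ) < r := by exact_mod_cast hr
  have hfact : (0:ℝ) < (r.factorial : ℝ) := by exact_mod_cast r.factorial_pos
  have h1 : (n.choose r : ℝ) ≤ (n:ℝ)^r / (r.factorial : ℝ) := by
    have := Nat.choose_le_pow_div (α := ℝ) r n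
    push_cast at this ⊢
    exact this
  have h2 : (r:ℝ)^r / (r.factorial : ℝ) ≤ Real.exp r :=
    Real.pow_div_factorial_le_exp (x := (r:ℝ)) hrpos.le r
  have h3 : Real.exp (r:ℝ) = Real.exp 1 ^ r := by
    rw [← Real.exp_nat_mul]; norm_num
  have h4 : (r:ℝ)^r ≤ Real.exp 1 ^ r * (r.factorial : ℝ) := by
    rw [div_le_iff₀ hfact, h3] at h2; exact h2
  refine h1.trans ?_
  rw [show (Real.exp 1 * n / r)^r = Real.exp 1 ^ r * (n:ℝ)^r / (r:ℝ)^r by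
        rw [div_pow, mul_pow],
      div_le_div_iff₀ hfact (pow_pos hrpos r)]
  calc (n:ℝ)^r * (r:ℝ)^r ≤ (n:ℝ)^r * (Real.exp 1 ^ r * (r.factorial : ℝ)) :=
        mul_le_mul_of_nonneg_left h4 (by positivity)
    _ = Real.exp 1 ^ r * (n:ℝ)^r * (r.factorial : ℝ) := by ring

/-- For sufficiently large `n`, `b ≥ (2e)^5 · n` and `k ≥ 4`: for every `t` with
`k+1 ≤ t ≤ n`, `C(n,t)·C(b,t-1)·(2(t-1)/b)^(k·t) ≤ ((t-1)/(2n))^((k-3)(t-1))`. -/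
theorem stmt_5 : ∃ N : ℕ, ∀ n : ℕ, N ≤ n → ∀ b k t : ℕ,
    (2 * Real.exp 1) ^ 5 * n ≤ (b : ℝ) → 4 ≤ k → k + 1 ≤ t → t ≤ n →
    (n.choose t : ℝ) * (b.choose (t - 1) : ℝ) * (2 * ((t : ℝ) - 1) / b) ^ (k * t)
      ≤ (((t : ℝ) - 1) / (2 * n)) ^ ((k - 3) * (t - 1)) := by
  refine ⟨1, fun n hn b k t hb hk hkt htn => ?_⟩
  obtain ⟨j, rfl⟩ : ∃ j, k = j + 4 := ⟨k - 4, by omega⟩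
  obtain ⟨s, rfl⟩ : ∃ s, t = s + 1 := ⟨t - 1, by omega⟩
  have hsub1 : s + 1 - 1 = s := by omega
  have hsub2 : j + 4 - 3 = j + 1 := by omega
  rw [hsub1, hsub2]
  have hc : ((s+1:ℕ):ℝ) - 1 = (s:ℝ) := by push_cast; ring
  rw [hc]
  have hs4 : 4 ≤ s := by omega
  have hSpos : (0:ℝ) < (s:ℝ) := by exact_mod_cast (by omega : 0 < s)
  have hSN : (s:ℝ) + 1 ≤ (n:ℝ) := by exact_mod_cast htn
  have hNpos : (0:ℝ) < (n:ℝ) := by linarith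
  have hSn : (s:ℝ) ≤ (n:ℝ) := by linarith
  have hE1 : (1:ℝ) ≤ Real.exp 1 := Real.one_le_exp (by norm_num)
  have hBpos : (0:ℝ) < (b:ℝ) := by
    have : (0:ℝ) < (2*Real.exp 1)^5 * n := mul_pos (pow_pos (by linarith) 5) hNpos
    linarith
  -- binomial bounds
  have h1 : (n.choose (s+1) : ℝ) ≤ (Real.exp 1 * n / ((s:ℝ)+1))^(s+1) := by
    have := choose_le_real n (s+1) (by omega)
    push_cast at this
    exact this
  have h2 : (b.choose s : ℝ) ≤ (Real.exp 1 * b / (s:ℝ))^s :=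
    choose_le_real b s (by omega)
  -- P ≤ R^(j+1)
  have hP : (Real.exp 1 * n / (s:ℝ)) * (Real.exp 1 * b / (s:ℝ)) * (2*(s:ℝ)/b)^(j+4)
      ≤ ((s:ℝ)/(2*n))^(j+1) := by
    have key : Real.exp 1 ^ 2 * 2^(2*j+5) * (n:ℝ)^(j+3) ≤ (b:ℝ)^(j+3) :=
      aux_pow_le (Real.exp 1) n b hE1 hNpos.le hb 2 (2*j+5) (j+3) (by omega) (by omega)
    have hPe : (Real.exp 1 * n / (s:ℝ)) * (Real.exp 1 * b / (s:ℝ)) * (2*(s:ℝ)/b)^(j+4)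
        = (Real.exp 1^2 * 2^(j+4) * n * (s:ℝ)^(j+2)) / ((b:ℝ)^(j+3)) := by
      rw [div_pow]
      field_simp
      ring
    rw [hPe, div_pow, div_le_div_iff₀ (by positivity) (by positivity)]
    calc Real.exp 1^2 * 2^(j+4) * (n:ℝ) * (s:ℝ)^(j+2) * (2*(n:ℝ))^(j+1)
        = (s:ℝ)^(j+1) * (Real.exp 1^2 * 2^(2*j+5) * (n:ℝ)^(j+2) * (s:ℝ)) := by ring
      _ ≤ (s:ℝ)^(j+1) * (Real.exp 1^2 * 2^(2*j+5) * (n:ℝ)^(j+2) * (n:ℝ)) := by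
          apply mul_le_mul_of_nonneg_left _ (by positivity)
          exact mul_le_mul_of_nonneg_left hSn (by positivity)
      _ = (s:ℝ)^(j+1) * (Real.exp 1^2 * 2^(2*j+5) * (n:ℝ)^(j+3)) := by ring
      _ ≤ (s:ℝ)^(j+1) * (b:ℝ)^(j+3) := mul_le_mul_of_nonneg_left key (by positivity)
  -- Q ≤ 1
  have hQ : (Real.exp 1 * n / (s:ℝ)) * (2*(s:ℝ)/b)^(j+4) ≤ 1 := by
    have key : Real.exp 1 ^ 1 * 2^(j+4) * (n:ℝ)^(j+4) ≤ (b:ℝ)^(j+4) :=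
      aux_pow_le (Real.exp 1) n b hE1 hNpos.le hb 1 (j+4) (j+4) (by omega) (by omega)
    have hQe : (Real.exp 1 * n / (s:ℝ)) * (2*(s:ℝ)/b)^(j+4)
        = (Real.exp 1 * 2^(j+4) * n * (s:ℝ)^(j+3)) / ((b:ℝ)^(j+4)) := by
      rw [div_pow]
      field_simp
      ring
    rw [hQe, div_le_one (by positivity)]
    calc Real.exp 1 * 2^(j+4) * (n:ℝ) * (s:ℝ)^(j+3)
        ≤ Real.exp 1 * 2^(j+4) * (n:ℝ) * (n:ℝ)^(j+3) := by
          exact mul_le_mul_of_nonneg_left (pow_le_pow_left₀ hSpos.le hSn _) (by positivity)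
      _ = Real.exp 1 ^ 1 * 2^(j+4) * (n:ℝ)^(j+4) := by ring
      _ ≤ (b:ℝ)^(j+4) := key
  -- main chain
  calc (n.choose (s+1) : ℝ) * (b.choose s : ℝ) * (2*(s:ℝ)/b)^((j+4)*(s+1))
      ≤ (Real.exp 1 * n / ((s:ℝ)+1))^(s+1) * (Real.exp 1 * b / (s:ℝ))^s
          * (2*(s:ℝ)/b)^((j+4)*(s+1)) := by
        exact mul_le_mul_of_nonneg_right
          (mul_le_mul h1 h2 (by positivity) (by positivity)) (by positivity)
    _ ≤ (Real.exp 1 * n / (s:ℝ))^(s+1) * (Real.exp 1 * b / (s:ℝ))^s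
          * (2*(s:ℝ)/b)^((j+4)*(s+1)) := by
        have hbb : Real.exp 1 * n / ((s:ℝ)+1) ≤ Real.exp 1 * n / (s:ℝ) :=
          div_le_div_of_nonneg_left (by positivity) hSpos (by linarith)
        exact mul_le_mul_of_nonneg_right
          (mul_le_mul_of_nonneg_right
            (pow_le_pow_left₀ (by positivity) hbb (s+1)) (by positivity))
          (by positivity)
    _ = ((Real.exp 1 * n / (s:ℝ)) * (Real.exp 1 * b / (s:ℝ)) * (2*(s:ℝ)/b)^(j+4))^s
          * ((Real.exp 1 * n / (s:ℝ)) * (2*(s:ℝ)/b)^(j+4)) := by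
        rw [pow_mul]
        ring
    _ ≤ (((s:ℝ)/(2*n))^(j+1))^s * 1 :=
        mul_le_mul (pow_le_pow_left₀ (by positivity) hP s) hQ (by positivity) (by positivity)
    _ = ((s:ℝ)/(2*n))^((j+1)*s) := by rw [mul_one, ← pow_mul]
end
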